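/- Fast-switching limit of the flux: for each r > 0 let (v₀ʳ, v₁ʳ) be a solution of the insect-respiration BVP at rate r and let F(r) = D·((v₀ʳ)'(0) + (v₁ʳ)'(0)). Then F(r) → D·c/L as r → ∞. That is, no matter how small the fixed proportion ρ ∈ (0,1) of time spent open is, in the fast-switching limit the mean oxygen flux to the tissue converges to the flux Dc/L of the always-open (pure Dirichlet) problem — an insect can keep its spiracles open a small proportion of time yet receive essentially as much oxygen as if they were always open, provided they open and close with high frequency. -/

import Mathlib

open Set Filter Real

/-- Key identity for a single rate `r`. -/
lemma insect_key (L D c ρ r : ℝ) (hL : 0 < L) (hD : 0 < D) (hr : 0 < r)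
    (f₀ f₁ : ℝ → ℝ) (a b : ℝ) (ha : a < 0) (hb : L < b)
    (h₀ : ContDiffOn ℝ 2 f₀ (Set.Ioo a b)) (h₁ : ContDiffOn ℝ 2 f₁ (Set.Ioo a b))
    (ode0 : ∀ x ∈ Set.Icc (0:ℝ) L, D * deriv (deriv f₀) x = (1 - ρ) * r * f₀ x - ρ * r * f₁ x)
    (ode1 : ∀ x ∈ Set.Icc (0:ℝ) L, D * deriv (deriv f₁) x = ρ * r * f₁ x - (1 - ρ) * r * f₀ x)
    (b0 : f₀ 0 = 0) (b1 : f₁ 0 = 0) (b2 : deriv f₁ L = 0) (b3 : f₀ L = ρ * c) :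
    (deriv f₀ 0 + deriv f₁ 0) *
        ((1 - ρ) * Real.sinh (Real.sqrt (r / D) * L)
          + ρ * (Real.sqrt (r / D) * L) * Real.cosh (Real.sqrt (r / D) * L))
      = ρ * Real.sqrt (r / D) * c * Real.cosh (Real.sqrt (r / D) * L) := by
  set k := Real.sqrt (r / D) with hk
  have hkpos : 0 < k := Real.sqrt_pos.2 (div_pos hr hD)
  have hk2 : k ^ 2 = r / D := Real.sq_sqrt (div_pos hr hD).le
  have hopen : IsOpen (Set.Ioo a b) := isOpen_Ioo
  have hsub : Set.Icc (0:ℝ) L ⊆ Set.Ioo a b := fun x hx =>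
    ⟨lt_of_lt_of_le ha hx.1, lt_of_le_of_lt hx.2 hb⟩
  -- derivative facts
  have hd₀ : ∀ x ∈ Set.Ioo a b, HasDerivAt f₀ (deriv f₀ x) x := fun x hx =>
    ((h₀.differentiableOn two_ne_zero).differentiableAt (hopen.mem_nhds hx)).hasDerivAt
  have hd₁ : ∀ x ∈ Set.Ioo a b, HasDerivAt f₁ (deriv f₁ x) x := fun x hx =>
    ((h₁.differentiableOn two_ne_zero).differentiableAt (hopen.mem_nhds hx)).hasDerivAt
  have hdd₀ : ∀ x ∈ Set.Ioo a b, HasDerivAt (deriv f₀) (deriv (deriv f₀) x) x := fun x hx =>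
    (((h₀.deriv_of_isOpen (m := 1) hopen (by norm_num)).differentiableOn one_ne_zero).differentiableAt
      (hopen.mem_nhds hx)).hasDerivAt
  have hdd₁ : ∀ x ∈ Set.Ioo a b, HasDerivAt (deriv f₁) (deriv (deriv f₁) x) x := fun x hx =>
    (((h₁.deriv_of_isOpen (m := 1) hopen (by norm_num)).differentiableOn one_ne_zero).differentiableAt
      (hopen.mem_nhds hx)).hasDerivAt
  set s₀ := deriv f₀ 0 + deriv f₁ 0 with hs₀
  -- Part A : deriv f₀ + deriv f₁ is constant on Icc 0 L
  have hWd : ∀ x ∈ Set.Icc (0:ℝ) L,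
      HasDerivAt (fun y => deriv f₀ y + deriv f₁ y) 0 x := by
    intro x hx
    have h := (hdd₀ x (hsub hx)).add (hdd₁ x (hsub hx))
    have hz : deriv (deriv f₀) x + deriv (deriv f₁) x = 0 := by
      have e0 := ode0 x hx; have e1 := ode1 x hx
      have : D * (deriv (deriv f₀) x + deriv (deriv f₁) x) = 0 := by linarith
      have := mul_eq_zero.1 this
      rcases this with h | h
      · exact absurd h hD.ne'
      · exact h
    rwa [hz] at h
  have hWconst : ∀ x ∈ Set.Icc (0:ℝ) L, deriv f₀ x + deriv f₁ x = s₀ := by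
    have := constant_of_has_deriv_right_zero
      (f := fun y => deriv f₀ y + deriv f₁ y) (a := 0) (b := L)
      (fun x hx => ((hWd x hx).continuousAt).continuousWithinAt)
      (fun x hx => ((hWd x (Set.mem_Icc_of_Ico hx)).hasDerivWithinAt))
    intro x hx
    simpa using this x hx
  have hWL : deriv f₀ L + deriv f₁ L = s₀ := hWconst L (by constructor <;> linarith)
  -- Part B : f₀ + f₁ is linear with slope s₀
  have hVd : ∀ x ∈ Set.Icc (0:ℝ) L,
      HasDerivAt (fun y => f₀ y + f₁ y - s₀ * y) 0 x := by
    intro x hx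
    have h := ((hd₀ x (hsub hx)).add (hd₁ x (hsub hx))).sub
      ((hasDerivAt_id x).const_mul s₀)
    have : deriv f₀ x + deriv f₁ x - s₀ * 1 = 0 := by
      rw [hWconst x hx]; ring
    rwa [this] at h
  have hVL : f₀ L + f₁ L - s₀ * L = 0 := by
    have := constant_of_has_deriv_right_zero
      (f := fun y => f₀ y + f₁ y - s₀ * y) (a := 0) (b := L)
      (fun x hx => ((hVd x hx).continuousAt).continuousWithinAt)
      (fun x hx => ((hVd x (Set.mem_Icc_of_Ico hx)).hasDerivWithinAt))
    have h := this L (by constructor <;> linarith)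
    simpa [b0, b1] using h
  have hf₁L : f₁ L = s₀ * L - ρ * c := by
    have := hVL; rw [b3] at this; linarith
  -- Part C : u = (1-ρ) f₀ - ρ f₁, ψ = u' sinh(kx) - k u cosh(kx) is constant
  have hψd : ∀ x ∈ Set.Icc (0:ℝ) L,
      HasDerivAt (fun y => ((1-ρ) * deriv f₀ y - ρ * deriv f₁ y) * Real.sinh (k*y)
        - k * ((1-ρ) * f₀ y - ρ * f₁ y) * Real.cosh (k*y)) 0 x := by
    intro x hx
    have hkx : HasDerivAt (fun y : ℝ => k * y) k x := by
      simpa using (hasDerivAt_id x).const_mul k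
    have hsinh : HasDerivAt (fun y : ℝ => Real.sinh (k*y)) (Real.cosh (k*x) * k) x :=
      (Real.hasDerivAt_sinh (k*x)).comp x hkx
    have hcosh : HasDerivAt (fun y : ℝ => Real.cosh (k*y)) (Real.sinh (k*x) * k) x :=
      (Real.hasDerivAt_cosh (k*x)).comp x hkx
    have hu' : HasDerivAt (fun y => (1-ρ) * deriv f₀ y - ρ * deriv f₁ y)
        ((1-ρ) * deriv (deriv f₀) x - ρ * deriv (deriv f₁) x) x :=
      ((hdd₀ x (hsub hx)).const_mul (1-ρ)).sub ((hdd₁ x (hsub hx)).const_mul ρ)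
    have hu : HasDerivAt (fun y => (1-ρ) * f₀ y - ρ * f₁ y)
        ((1-ρ) * deriv f₀ x - ρ * deriv f₁ x) x :=
      ((hd₀ x (hsub hx)).const_mul (1-ρ)).sub ((hd₁ x (hsub hx)).const_mul ρ)
    have h := (hu'.mul hsinh).sub (((hu.const_mul k).mul hcosh))
    have hzero :
        ((1-ρ) * deriv (deriv f₀) x - ρ * deriv (deriv f₁) x) * Real.sinh (k*x)
          + ((1-ρ) * deriv f₀ x - ρ * deriv f₁ x) * (Real.cosh (k*x) * k)
          - (k * ((1-ρ) * deriv f₀ x - ρ * deriv f₁ x) * Real.cosh (k*x)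
            + k * ((1-ρ) * f₀ x - ρ * f₁ x) * (Real.sinh (k*x) * k)) = 0 := by
      have huu : (1-ρ) * deriv (deriv f₀) x - ρ * deriv (deriv f₁) x
          = k^2 * ((1-ρ) * f₀ x - ρ * f₁ x) := by
        have e0 := ode0 x hx; have e1 := ode1 x hx
        have hA : D * ((1-ρ) * deriv (deriv f₀) x - ρ * deriv (deriv f₁) x)
            = r * ((1-ρ) * f₀ x - ρ * f₁ x) := by linear_combination (1-ρ)*e0 - ρ*e1
        have hB : D * (k^2 * ((1-ρ) * f₀ x - ρ * f₁ x))
            = r * ((1-ρ) * f₀ x - ρ * f₁ x) := by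
          rw [hk2]; field_simp
        exact mul_left_cancel₀ hD.ne' (hA.trans hB.symm)
      rw [huu]; ring
    rw [← hzero]; exact h
  have hψ : ((1-ρ) * deriv f₀ L - ρ * deriv f₁ L) * Real.sinh (k*L)
      - k * ((1-ρ) * f₀ L - ρ * f₁ L) * Real.cosh (k*L)
      = ((1-ρ) * deriv f₀ 0 - ρ * deriv f₁ 0) * Real.sinh (k*0)
      - k * ((1-ρ) * f₀ 0 - ρ * f₁ 0) * Real.cosh (k*0) := by
    have := constant_of_has_deriv_right_zero
      (f := fun y => ((1-ρ) * deriv f₀ y - ρ * deriv f₁ y) * Real.sinh (k*y)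
        - k * ((1-ρ) * f₀ y - ρ * f₁ y) * Real.cosh (k*y)) (a := 0) (b := L)
      (fun x hx => ((hψd x hx).continuousAt).continuousWithinAt)
      (fun x hx => ((hψd x (Set.mem_Icc_of_Ico hx)).hasDerivWithinAt))
    exact this L (by constructor <;> linarith)
  have hd₀L : deriv f₀ L = s₀ := by rw [b2] at hWL; linarith
  simp only [b0, b1, b2, b3, hf₁L, hd₀L, mul_zero, sub_zero, Real.sinh_zero,
    Real.cosh_zero, mul_one, zero_mul] at hψ
  linear_combination hψ

/-- Fast-switching limit of the flux: if for each `r > 0` the pair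
`(v₀ r, v₁ r)` solves the insect-respiration BVP at rate `r`, then the flux
`F r = D·((v₀ r)'(0) + (v₁ r)'(0))` tends to `D·c/L` as `r → ∞`. -/
theorem insect_flux_fast_switching_limit
    (L D c ρ : ℝ) (hL : 0 < L) (hD : 0 < D) (hc : 0 < c) (hρ : ρ ∈ Set.Ioo (0:ℝ) 1)
    (v₀ v₁ : ℝ → ℝ → ℝ)
    (hreg : ∀ r > (0:ℝ), ∃ a b : ℝ, a < 0 ∧ L < b ∧
      ContDiffOn ℝ 2 (v₀ r) (Set.Ioo a b) ∧ ContDiffOn ℝ 2 (v₁ r) (Set.Ioo a b))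
    (hode0 : ∀ r > (0:ℝ), ∀ x ∈ Set.Icc (0:ℝ) L,
      D * deriv (deriv (v₀ r)) x = (1 - ρ) * r * v₀ r x - ρ * r * v₁ r x)
    (hode1 : ∀ r > (0:ℝ), ∀ x ∈ Set.Icc (0:ℝ) L,
      D * deriv (deriv (v₁ r)) x = ρ * r * v₁ r x - (1 - ρ) * r * v₀ r x)
    (hbc0 : ∀ r > (0:ℝ), v₀ r 0 = 0) (hbc1 : ∀ r > (0:ℝ), v₁ r 0 = 0)
    (hbc2 : ∀ r > (0:ℝ), deriv (v₁ r) L = 0) (hbc3 : ∀ r > (0:ℝ), v₀ r L = ρ * c) :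
    Filter.Tendsto (fun r => D * (deriv (v₀ r) 0 + deriv (v₁ r) 0))
      Filter.atTop (nhds (D * c / L)) := by
  obtain ⟨hρ0, hρ1⟩ := hρ
  set K : ℝ → ℝ := fun r => Real.sqrt (r / D) with hK
  set T : ℝ → ℝ := fun r => Real.sinh (K r * L) / (K r * Real.cosh (K r * L)) with hT
  set G : ℝ → ℝ := fun r => D * ρ * c / ((1 - ρ) * T r + ρ * L) with hG
  -- limit of K
  have hsqrt : Filter.Tendsto Real.sqrt Filter.atTop Filter.atTop := by
    apply Filter.tendsto_atTop_atTop.2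
    intro b
    refine ⟨(max b 0) ^ 2, fun x hx => le_trans (le_max_left b 0) ?_⟩
    rw [← Real.sqrt_sq (le_max_right b 0)]
    exact Real.sqrt_le_sqrt hx
  have hKtop : Filter.Tendsto K Filter.atTop Filter.atTop :=
    hsqrt.comp (Filter.tendsto_id.atTop_div_const hD)
  -- limit of T
  have hT0 : Filter.Tendsto T Filter.atTop (nhds 0) := by
    apply squeeze_zero' (g := fun r => (K r)⁻¹)
    · filter_upwards with r
      have h1 : 0 ≤ Real.sinh (K r * L) :=
        Real.sinh_nonneg_iff.2 (mul_nonneg (Real.sqrt_nonneg _) hL.le)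
      have h2 : 0 ≤ K r * Real.cosh (K r * L) :=
        mul_nonneg (Real.sqrt_nonneg _) (Real.cosh_pos _).le
      exact div_nonneg h1 h2
    · filter_upwards [Filter.eventually_gt_atTop (0:ℝ)] with r hr
      have hk : 0 < K r := Real.sqrt_pos.2 (div_pos hr hD)
      have hch : 0 < Real.cosh (K r * L) := Real.cosh_pos _
      have h3 : Real.sinh (K r * L) ≤ Real.cosh (K r * L) :=
        (Real.sinh_lt_cosh (x := K r * L)).le
      calc Real.sinh (K r * L) / (K r * Real.cosh (K r * L))
          ≤ Real.cosh (K r * L) / (K r * Real.cosh (K r * L)) := by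
            gcongr
        _ = (K r)⁻¹ := by field_simp
    · exact hKtop.inv_tendsto_atTop
  -- limit of G
  have hGlim : Filter.Tendsto G Filter.atTop (nhds (D * c / L)) := by
    have hden : Filter.Tendsto (fun r => (1 - ρ) * T r + ρ * L) Filter.atTop
        (nhds ((1 - ρ) * 0 + ρ * L)) :=
      ((hT0.const_mul (1 - ρ)).add_const (ρ * L))
    have hne : (1 - ρ) * 0 + ρ * L ≠ 0 := by
      rw [mul_zero, zero_add]; positivity
    have := (tendsto_const_nhds (x := D * ρ * c)).div hden hne
    convert this using 2
    · rfl
    rw [mul_zero, zero_add]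
    field_simp
  -- eventual equality of flux with G
  refine hGlim.congr' ?_
  filter_upwards [Filter.eventually_gt_atTop (0:ℝ)] with r hr
  obtain ⟨a, b, ha, hb, h₀, h₁⟩ := hreg r hr
  have key := insect_key L D c ρ r hL hD hr (v₀ r) (v₁ r) a b ha hb h₀ h₁
    (hode0 r hr) (hode1 r hr) (hbc0 r hr) (hbc1 r hr) (hbc2 r hr) (hbc3 r hr)
  have hk : 0 < K r := Real.sqrt_pos.2 (div_pos hr hD)
  have hch : 0 < Real.cosh (K r * L) := Real.cosh_pos _
  have hsh : 0 < Real.sinh (K r * L) := Real.sinh_pos_iff.2 (by positivity)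
  have hden : (0:ℝ) < (1 - ρ) * Real.sinh (K r * L)
      + ρ * (K r * L) * Real.cosh (K r * L) := by
    have h1 : 0 < 1 - ρ := by linarith
    positivity
  have hTden : 0 < (1 - ρ) * T r + ρ * L := by
    have h1 : 0 ≤ T r := div_nonneg hsh.le (by positivity)
    have h2 : 0 < 1 - ρ := by linarith
    positivity
  -- G r = D * s₀
  have hKr : K r = Real.sqrt (r / D) := rfl
  rw [← hKr] at key
  have hTr : T r = Real.sinh (K r * L) / (K r * Real.cosh (K r * L)) := rfl
  have hGr : G r = D * ρ * c / ((1 - ρ) * T r + ρ * L) := rfl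
  rw [hGr, div_eq_iff hTden.ne', hTr]
  field_simp
  nlinarith [key, mul_pos hk hch]
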